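/- If G is a d-regular finite simple graph of order n with d ≥ 1, then gp(μ(G)) ≤ n + (d − 1)/2 + 1/d (as an inequality of rational numbers; equivalently, 2d·gp(μ(G)) ≤ 2dn + d(d−1) + 2). -/

import Mathlib

open SimpleGraph

variable {V : Type*}

/-- The Mycielskian of a graph `G`: vertices are `some (Sum.inl v)` (original vertices),
`some (Sum.inr v)` (twin vertices), and `none` (the root `u*`). -/
def Mycielskian (G : SimpleGraph V) : SimpleGraph (Option (V ⊕ V)) :=
  SimpleGraph.fromRel (fun x y =>
    (∃ u v, G.Adj u v ∧ x = some (Sum.inl u) ∧ y = some (Sum.inl v)) ∨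
    (∃ u v, G.Adj u v ∧ x = some (Sum.inl u) ∧ y = some (Sum.inr v)) ∨
    (∃ u, x = some (Sum.inr u) ∧ y = none))

/-- `S` is a general position set: no shortest path between two vertices of `S`
contains a third element of `S`. -/
def IsGPSet (G : SimpleGraph V) (S : Set V) : Prop :=
  ∀ u ∈ S, ∀ v ∈ S, ∀ p : G.Walk u v, p.length = G.dist u v →
    ∀ w ∈ S, w ∈ p.support → w = u ∨ w = v

/-- The general position number of `G`: the maximum cardinality of a general position set. -/
noncomputable def gpNumber (G : SimpleGraph V) [Fintype V] : ℕ :=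
  sSup {k | ∃ S : Set V, IsGPSet G S ∧ S.ncard = k}

/-- A gp-set: a general position set of maximum cardinality. -/
def IsGpSet (G : SimpleGraph V) [Fintype V] (S : Set V) : Prop :=
  IsGPSet G S ∧ S.ncard = gpNumber G

/-- `G` is a `d`-regular graph: every vertex has degree `d`. -/
def IsRegularDeg (G : SimpleGraph V) (d : ℕ) : Prop :=
  ∀ v : V, (G.neighborSet v).ncard = d

namespace GPAux

open Sum

/-! ### Adjacency in the Mycielskian -/

lemma myc_adj_oo (G : SimpleGraph V) {u v : V} :
    (Mycielskian G).Adj (some (inl u)) (some (inl v)) ↔ G.Adj u v := by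
  simp only [Mycielskian, fromRel_adj]
  constructor
  · rintro ⟨hne, h | h⟩
    · aesop
    · have : G.Adj v u := by aesop
      exact this.symm
  · intro h; exact ⟨by simp [h.ne], Or.inl (Or.inl ⟨u, v, h, rfl, rfl⟩)⟩

lemma myc_adj_ot (G : SimpleGraph V) {u v : V} :
    (Mycielskian G).Adj (some (inl u)) (some (inr v)) ↔ G.Adj u v := by
  simp only [Mycielskian, fromRel_adj]
  constructor
  · rintro ⟨hne, h | h⟩ <;> aesop
  · intro h; exact ⟨by simp, Or.inl (Or.inr (Or.inl ⟨u, v, h, rfl, rfl⟩))⟩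

lemma myc_adj_tt (G : SimpleGraph V) {u v : V} :
    ¬ (Mycielskian G).Adj (some (inr u)) (some (inr v)) := by
  simp only [Mycielskian, fromRel_adj]
  rintro ⟨hne, h | h⟩ <;> aesop

lemma myc_adj_tr (G : SimpleGraph V) (u : V) :
    (Mycielskian G).Adj (some (inr u)) none := by
  simp only [Mycielskian, fromRel_adj]
  exact ⟨by simp, Or.inl (Or.inr (Or.inr ⟨u, rfl, trivial⟩))⟩

lemma myc_adj_or (G : SimpleGraph V) (u : V) :
    ¬ (Mycielskian G).Adj (some (inl u)) none := by
  simp only [Mycielskian, fromRel_adj]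
  rintro ⟨hne, h | h⟩ <;> aesop

/-! ### Walk and distance helpers -/

lemma walk_len2_mid {α : Type*} {H : SimpleGraph α} {x y : α} (p : H.Walk x y)
    (h : p.length = 2) : ∃ m, H.Adj x m ∧ H.Adj m y := by
  cases p with
  | nil => simp at h
  | cons h1 q =>
    cases q with
    | nil => simp at h
    | cons h2 r =>
      cases r with
      | nil => exact ⟨_, h1, h2⟩
      | cons h3 s => simp [SimpleGraph.Walk.length_cons] at h

lemma dist_eq_two' {α : Type*} {H : SimpleGraph α} {x y m : α} (hne : x ≠ y)
    (hnadj : ¬ H.Adj x y) (h1 : H.Adj x m) (h2 : H.Adj m y) : H.dist x y = 2 := by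
  have hle : H.dist x y ≤ 2 := by
    simpa using SimpleGraph.dist_le (SimpleGraph.Walk.cons h1 (SimpleGraph.Walk.cons h2 SimpleGraph.Walk.nil))
  have hreach : H.Reachable x y := ⟨SimpleGraph.Walk.cons h1 (SimpleGraph.Walk.cons h2 SimpleGraph.Walk.nil)⟩
  have h0 : 0 < H.dist x y := hreach.pos_dist_of_ne hne
  have h1' : H.dist x y ≠ 1 := fun hc => hnadj (SimpleGraph.dist_eq_one_iff_adj.mp hc)
  omega

lemma dist_eq_three' {α : Type*} {H : SimpleGraph α} {x y m₁ m₂ : α} (hne : x ≠ y)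
    (hnadj : ¬ H.Adj x y) (hmid : ∀ m, ¬ (H.Adj x m ∧ H.Adj m y))
    (h1 : H.Adj x m₁) (h2 : H.Adj m₁ m₂) (h3 : H.Adj m₂ y) : H.dist x y = 3 := by
  have hle : H.dist x y ≤ 3 := by
    simpa using SimpleGraph.dist_le (SimpleGraph.Walk.cons h1 (SimpleGraph.Walk.cons h2
      (SimpleGraph.Walk.cons h3 SimpleGraph.Walk.nil)))
  have hreach : H.Reachable x y := ⟨SimpleGraph.Walk.cons h1 (SimpleGraph.Walk.cons h2
      (SimpleGraph.Walk.cons h3 SimpleGraph.Walk.nil))⟩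
  have h0 : 0 < H.dist x y := hreach.pos_dist_of_ne hne
  have h1' : H.dist x y ≠ 1 := fun hc => hnadj (SimpleGraph.dist_eq_one_iff_adj.mp hc)
  have h2' : H.dist x y ≠ 2 := by
    intro hc
    obtain ⟨p, hp⟩ := hreach.exists_walk_length_eq_dist
    rw [hc] at hp
    obtain ⟨m, hm1, hm2⟩ := walk_len2_mid p hp
    exact hmid m ⟨hm1, hm2⟩
  omega

/-- A general position set admits no shortest 2-walk through a third member. -/
lemma gp_not_mid2 {α : Type*} {H : SimpleGraph α} {S : Set α} (hS : ∀ u ∈ S, ∀ v ∈ S,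
      ∀ p : H.Walk u v, p.length = H.dist u v → ∀ w ∈ S, w ∈ p.support → w = u ∨ w = v)
    {x y m : α} (hx : x ∈ S) (hy : y ∈ S) (hm : m ∈ S) (hne : x ≠ y)
    (hnadj : ¬ H.Adj x y) (h1 : H.Adj x m) (h2 : H.Adj m y)
    (hmx : m ≠ x) (hmy : m ≠ y) : False := by
  have hd := dist_eq_two' hne hnadj h1 h2
  have := hS x hx y hy (SimpleGraph.Walk.cons h1 (SimpleGraph.Walk.cons h2 SimpleGraph.Walk.nil))
    (by simp [hd]) m hm (by simp)
  rcases this with h | h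
  · exact hmx h
  · exact hmy h

/-- A general position set admits no shortest 3-walk through a third member
(the member being the first interior vertex). -/
lemma gp_not_mid3 {α : Type*} {H : SimpleGraph α} {S : Set α} (hS : ∀ u ∈ S, ∀ v ∈ S,
      ∀ p : H.Walk u v, p.length = H.dist u v → ∀ w ∈ S, w ∈ p.support → w = u ∨ w = v)
    {x y m₁ m₂ : α} (hx : x ∈ S) (hy : y ∈ S) (hm : m₁ ∈ S) (hne : x ≠ y)
    (hnadj : ¬ H.Adj x y) (hmid : ∀ m, ¬ (H.Adj x m ∧ H.Adj m y))
    (h1 : H.Adj x m₁) (h2 : H.Adj m₁ m₂) (h3 : H.Adj m₂ y)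
    (hmx : m₁ ≠ x) (hmy : m₁ ≠ y) : False := by
  have hd := dist_eq_three' hne hnadj hmid h1 h2 h3
  have := hS x hx y hy (SimpleGraph.Walk.cons h1 (SimpleGraph.Walk.cons h2
    (SimpleGraph.Walk.cons h3 SimpleGraph.Walk.nil))) (by simp [hd]) m₁ hm (by simp)
  rcases this with h | h
  · exact hmx h
  · exact hmy h

lemma arith1 (d n k : ℕ) (hd : 1 ≤ d) (hk : k ≤ n + 1) :
    2 * d * k ≤ 2 * d * n + d * (d - 1) + 2 := by
  obtain ⟨e, rfl⟩ := Nat.exists_eq_add_of_le hd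
  have h1 : 1 + e - 1 = e := by omega
  rw [h1]
  have hee : e ≤ e * e := by
    rcases Nat.eq_zero_or_pos e with rfl | he
    · simp
    · exact Nat.le_mul_of_pos_left e he
  nlinarith [mul_le_mul_right hk (2*(1+e)), hee]

lemma arith2 (d n a : ℕ) (hd : 1 ≤ d) (h : a + d ≤ n) (k : ℕ) (hk : k ≤ a + 2) :
    2 * d * k ≤ 2 * d * n + d * (d - 1) + 2 := by
  obtain ⟨e, rfl⟩ := Nat.exists_eq_add_of_le hd
  have h1 : 1 + e - 1 = e := by omega
  rw [h1]
  nlinarith [mul_le_mul_right hk (2*(1+e)), mul_le_mul_right h (2*(1+e))]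

lemma main_bound [Fintype V] {G : SimpleGraph V} {d : ℕ} (hd : 1 ≤ d)
    (hreg : IsRegularDeg G d) {S : Set (Option (V ⊕ V))}
    (hS : IsGPSet (Mycielskian G) S) :
    2 * d * S.ncard ≤ 2 * d * Fintype.card V + d * (d - 1) + 2 := by
  classical
  set A : Set V := {v : V | some (inl v) ∈ S} with hA_def
  set B : Set V := {v : V | some (inr v) ∈ S} with hB_def
  have injo : Function.Injective (fun v : V => (some (inl v) : Option (V ⊕ V))) := by
    intro a b h; simpa using h
  have injt : Function.Injective (fun v : V => (some (inr v) : Option (V ⊕ V))) := by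
    intro a b h; simpa using h
  have hAcard : A.ncard ≤ Fintype.card V := by
    have := Set.ncard_le_ncard (Set.subset_univ A) Set.finite_univ
    rwa [Set.ncard_univ, Nat.card_eq_fintype_card] at this
  -- counting S
  have hSsub : ∀ x ∈ S, x = none ∨ (∃ v ∈ A, x = some (inl v)) ∨ (∃ v ∈ B, x = some (inr v)) := by
    intro x hx
    match x with
    | none => exact Or.inl rfl
    | some (inl v) => exact Or.inr (Or.inl ⟨v, hx, rfl⟩)
    | some (inr v) => exact Or.inr (Or.inr ⟨v, hx, rfl⟩)
  have hScard1 : S.ncard ≤ A.ncard + B.ncard + 1 := by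
    have hsub : S ⊆ ((fun v : V => (some (inl v) : Option (V ⊕ V))) '' A) ∪
        (((fun v : V => (some (inr v) : Option (V ⊕ V))) '' B) ∪ {none}) := by
      intro x hx
      rcases hSsub x hx with h | ⟨v, hv, h⟩ | ⟨v, hv, h⟩
      · exact Or.inr (Or.inr (by simp [h]))
      · exact Or.inl ⟨v, hv, h.symm⟩
      · exact Or.inr (Or.inl ⟨v, hv, h.symm⟩)
    calc S.ncard ≤ _ := Set.ncard_le_ncard hsub (Set.toFinite _)
      _ ≤ _ + _ := Set.ncard_union_le _ _
      _ ≤ _ + (_ + _) := by gcongr; exact Set.ncard_union_le _ _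
      _ ≤ A.ncard + B.ncard + 1 := by
          rw [Set.ncard_image_of_injective _ injo, Set.ncard_image_of_injective _ injt,
            Set.ncard_singleton]
          omega
  have hScard0 : none ∉ S → S.ncard ≤ A.ncard + B.ncard := by
    intro hroot
    have hsub : S ⊆ ((fun v : V => (some (inl v) : Option (V ⊕ V))) '' A) ∪
        ((fun v : V => (some (inr v) : Option (V ⊕ V))) '' B) := by
      intro x hx
      rcases hSsub x hx with h | ⟨v, hv, h⟩ | ⟨v, hv, h⟩
      · exact absurd (h ▸ hx) hroot
      · exact Or.inl ⟨v, hv, h.symm⟩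
      · exact Or.inr ⟨v, hv, h.symm⟩
    calc S.ncard ≤ _ := Set.ncard_le_ncard hsub (Set.toFinite _)
      _ ≤ _ + _ := Set.ncard_union_le _ _
      _ = A.ncard + B.ncard := by
          rw [Set.ncard_image_of_injective _ injo, Set.ncard_image_of_injective _ injt]
  -- structural facts
  have hF1 : ∀ v, v ∈ A → v ∈ B → ∀ w, G.Adj v w → w ∉ A := by
    intro v hv hv' w hvw hw
    exact gp_not_mid2 hS hv hv' hw (by simp) (by rw [myc_adj_ot]; exact G.loopless.irrefl v)
      ((myc_adj_oo G).mpr hvw) ((myc_adj_ot G).mpr hvw.symm)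
      (by simp [hvw.ne']) (by simp)
  have hF2 : ∀ u v x, u ∈ B → v ∈ B → u ≠ v → G.Adj x u → G.Adj x v → x ∉ A := by
    intro u v x hu hv huv hxu hxv hx
    exact gp_not_mid2 hS hu hv hx (by simp [huv]) (myc_adj_tt G)
      ((myc_adj_ot G).mpr hxu).symm ((myc_adj_ot G).mpr hxv) (by simp) (by simp)
  have hFroot : ∀ u v, u ∈ B → v ∈ B → u ≠ v → none ∉ S := by
    intro u v hu hv huv hr
    exact gp_not_mid2 hS hu hv hr (by simp [huv]) (myc_adj_tt G)
      (myc_adj_tr G u) ((myc_adj_tr G v).symm) (by simp) (by simp)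
  have hF6 : ∀ u v b, u ∈ A → v ∈ A → u ≠ v → ¬ G.Adj u v → G.Adj u b → G.Adj b v →
      b ∉ B := by
    intro u v b hu hv huv hnadj hub hbv hb
    exact gp_not_mid2 hS hu hv hb (by simp [huv]) (by rw [myc_adj_oo]; exact hnadj)
      ((myc_adj_ot G).mpr hub) (((myc_adj_ot G).mpr hbv.symm).symm) (by simp) (by simp)
  have hFCN : ∀ v b z, v ∈ A → b ∈ B → G.Adj v b → z ∈ B → z ≠ v → ¬ G.Adj v z →
      b ≠ z → ∃ x, G.Adj v x ∧ G.Adj x z := by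
    intro v b z hv hb hvb hz hzv hnadj hbz
    by_contra hno
    push_neg at hno
    refine gp_not_mid3 hS hv hz hb (by simp) (by rw [myc_adj_ot]; exact hnadj) ?_
      ((myc_adj_ot G).mpr hvb) (myc_adj_tr G b) ((myc_adj_tr G z).symm)
      (by simp) (by simp [hbz])
    intro m hm
    match m with
    | none => exact myc_adj_or G v hm.1
    | some (inl x) => exact hno x ((myc_adj_oo G).mp hm.1) ((myc_adj_ot G).mp hm.2)
    | some (inr y) => exact myc_adj_tt G hm.2
  -- case analysis on B
  by_cases hBpair : ∃ u ∈ B, ∃ v ∈ B, u ≠ v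
  · -- main case : |B| ≥ 2
    obtain ⟨u₁, hu₁, u₂, hu₂, hu12⟩ := hBpair
    have hroot : none ∉ S := hFroot u₁ u₂ hu₁ hu₂ hu12
    set B1 : Set V := A ∩ B with hB1_def
    set B2 : Set V := B \ A with hB2_def
    set T : Set V := {v : V | v ∈ B1 ∧ ∃ b ∈ B, G.Adj v b} with hT_def
    set U₀ : Set V := {w : V | w ∉ B ∧ ∃ v ∈ B1, G.Adj v w} with hU_def
    have degf : ∀ v : V, (G.neighborFinset v).card = d := by
      intro v
      rw [neighborFinset_def, ← Set.ncard_eq_toFinset_card']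
      exact hreg v
    -- unique B-neighbor for B1 vertices
    have huniq : ∀ v ∈ B1, ∀ b₁ ∈ B, ∀ b₂ ∈ B, G.Adj v b₁ → G.Adj v b₂ → b₁ = b₂ := by
      intro v hv b₁ hb₁ b₂ hb₂ h1 h2
      by_contra hne
      exact hF2 b₁ b₂ v hb₁ hb₂ hne h1 h2 hv.1
    -- edge counting: d * |B1| ≤ d * |U₀| + |T|
    have key1 : ∀ v ∈ B1.toFinset,
        d ≤ (U₀.toFinset.filter (G.Adj v ·)).card + (if v ∈ T then 1 else 0) := by
      intro v hv
      rw [Set.mem_toFinset] at hv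
      have hsub : G.neighborFinset v ⊆
          (U₀.toFinset.filter (G.Adj v ·)) ∪ (B.toFinset.filter (G.Adj v ·)) := by
        intro w hw
        rw [mem_neighborFinset] at hw
        by_cases hwB : w ∈ B
        · exact Finset.mem_union_right _ (Finset.mem_filter.mpr ⟨Set.mem_toFinset.mpr hwB, hw⟩)
        · exact Finset.mem_union_left _ (Finset.mem_filter.mpr
            ⟨Set.mem_toFinset.mpr ⟨hwB, v, hv, hw⟩, hw⟩)
      have hcard2 : (B.toFinset.filter (G.Adj v ·)).card ≤ (if v ∈ T then 1 else 0) := by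
        by_cases hvT : v ∈ T
        · rw [if_pos hvT]
          apply Finset.card_le_one.mpr
          intro a ha b hb
          rw [Finset.mem_filter, Set.mem_toFinset] at ha hb
          exact huniq v hv a ha.1 b hb.1 ha.2 hb.2
        · rw [if_neg hvT, Nat.le_zero, Finset.card_eq_zero, Finset.filter_eq_empty_iff]
          intro b hb hadj
          rw [Set.mem_toFinset] at hb
          exact hvT ⟨hv, b, hb, hadj⟩
      calc d = (G.neighborFinset v).card := (degf v).symm
        _ ≤ _ := Finset.card_le_card hsub
        _ ≤ _ + _ := Finset.card_union_le _ _
        _ ≤ _ := by omega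
    have hTsubB1 : T.toFinset ⊆ B1.toFinset := by
      intro v hv; rw [Set.mem_toFinset] at *; exact hv.1
    have hedge : d * B1.ncard ≤ d * U₀.ncard + T.ncard := by
      rw [Set.ncard_eq_toFinset_card' B1, Set.ncard_eq_toFinset_card' U₀,
        Set.ncard_eq_toFinset_card' T]
      have s1 : d * B1.toFinset.card ≤
          (∑ v ∈ B1.toFinset, (U₀.toFinset.filter (G.Adj v ·)).card) + T.toFinset.card := by
        have := Finset.sum_le_sum key1
        rw [Finset.sum_add_distrib] at this
        have hconst : ∑ _v ∈ B1.toFinset, d = d * B1.toFinset.card := by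
          rw [Finset.sum_const, smul_eq_mul, mul_comm]
        have hite : (∑ v ∈ B1.toFinset, if v ∈ T then 1 else 0) = T.toFinset.card := by
          rw [← Finset.card_filter]
          congr 1
          ext v
          simp only [Finset.mem_filter, Set.mem_toFinset]
          exact ⟨fun h => h.2, fun h => ⟨h.1, h⟩⟩
        linarith [this, hconst, hite]
      have s2 : (∑ v ∈ B1.toFinset, (U₀.toFinset.filter (G.Adj v ·)).card) =
          ∑ u ∈ U₀.toFinset, (B1.toFinset.filter (fun v => G.Adj v u)).card := by
        simp_rw [Finset.card_filter]
        exact Finset.sum_comm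
      have s3 : ∀ u ∈ U₀.toFinset, (B1.toFinset.filter (fun v => G.Adj v u)).card ≤ d := by
        intro u _
        refine le_trans (Finset.card_le_card ?_) (le_of_eq (degf u))
        intro w hw
        rw [Finset.mem_filter] at hw
        rw [mem_neighborFinset]
        exact hw.2.symm
      have s4 : (∑ u ∈ U₀.toFinset, (B1.toFinset.filter (fun v => G.Adj v u)).card) ≤
          d * U₀.toFinset.card := by
        calc _ ≤ ∑ _u ∈ U₀.toFinset, d := Finset.sum_le_sum s3
          _ = d * U₀.toFinset.card := by rw [Finset.sum_const, smul_eq_mul, mul_comm]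
      linarith [s1, s2, s4]
    -- coverage bound : 2 * |T| ≤ d * (d-1) + 2
    have hcov : 2 * T.ncard ≤ d * (d - 1) + 2 := by
      rcases Set.eq_empty_or_nonempty T with hTe | ⟨v₀, hv₀⟩
      · rw [hTe, Set.ncard_empty]
        omega
      · have hchoice : ∀ w, w ∈ T → ∃ b, b ∈ B ∧ G.Adj w b := by
          intro w hw
          obtain ⟨b, hb, hadj⟩ := hw.2
          exact ⟨b, hb, hadj⟩
        set β : V → V := fun w => if h : ∃ b, b ∈ B ∧ G.Adj w b then h.choose else w with hβ_def
        have hβ : ∀ w ∈ T, β w ∈ B ∧ G.Adj w (β w) := by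
          intro w hw
          have hex : ∃ b, b ∈ B ∧ G.Adj w b := hchoice w hw
          simp only [hβ_def, dif_pos hex]
          exact hex.choose_spec
        have hβA : ∀ w ∈ T, β w ∉ A := fun w hw =>
          hF1 w hw.1.1 hw.1.2 (β w) (hβ w hw).2
        have huniq' : ∀ w ∈ T, ∀ b ∈ B, G.Adj w b → b = β w := by
          intro w hw b hb hadj
          exact huniq w hw.1 b hb (β w) (hβ w hw).1 hadj (hβ w hw).2
        have hnadjT : ∀ w₁ ∈ T, ∀ w₂, w₂ ∈ A → ¬ G.Adj w₁ w₂ := by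
          intro w₁ h₁ w₂ h₂ hadj
          exact hF1 w₁ h₁.1.1 h₁.1.2 w₂ hadj h₂
        have hβinj : ∀ w₁ ∈ T, ∀ w₂ ∈ T, β w₁ = β w₂ → w₁ = w₂ := by
          intro w₁ h₁ w₂ h₂ heq
          by_contra hne
          refine hF6 w₁ w₂ (β w₁) h₁.1.1 h₂.1.1 hne (hnadjT w₁ h₁ w₂ h₂.1.1) (hβ w₁ h₁).2
            ?_ (hβ w₁ h₁).1
          rw [heq]
          exact (hβ w₂ h₂).2.symm
        set Df : Finset V := (G.neighborFinset v₀).biUnion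
          (fun x => (G.neighborFinset x).erase v₀) with hDf_def
        have hDcard : Df.card ≤ d * (d - 1) := by
          calc Df.card ≤ ∑ x ∈ G.neighborFinset v₀, ((G.neighborFinset x).erase v₀).card :=
              Finset.card_biUnion_le
            _ = ∑ _x ∈ G.neighborFinset v₀, (d - 1) := by
                apply Finset.sum_congr rfl
                intro x hx
                rw [mem_neighborFinset] at hx
                rw [Finset.card_erase_of_mem (by rw [mem_neighborFinset]; exact hx.symm), degf x]
            _ = d * (d - 1) := by rw [Finset.sum_const, smul_eq_mul, degf v₀, mul_comm]
        have hmemD : ∀ z, z ∈ B → z ≠ v₀ → ¬ G.Adj v₀ z → β v₀ ≠ z → z ∈ Df := by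
          intro z hz hne hnadj hbz
          obtain ⟨x, hx1, hx2⟩ := hFCN v₀ (β v₀) z hv₀.1.1 (hβ v₀ hv₀).1 (hβ v₀ hv₀).2 hz hne
            hnadj hbz
          rw [hDf_def, Finset.mem_biUnion]
          refine ⟨x, by rw [mem_neighborFinset]; exact hx1,
            Finset.mem_erase.mpr ⟨hne, by rw [mem_neighborFinset]; exact hx2⟩⟩
        set Tf' : Finset V := T.toFinset.erase v₀ with hTf'_def
        have hsub1 : Tf' ⊆ Df := by
          intro w hw
          rw [hTf'_def, Finset.mem_erase, Set.mem_toFinset] at hw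
          obtain ⟨hwne, hwT⟩ := hw
          exact hmemD w hwT.1.2 hwne (hnadjT v₀ hv₀ w hwT.1.1)
            (fun h => hβA v₀ hv₀ (by rw [h]; exact hwT.1.1))
        have hsub2 : Tf'.image β ⊆ Df := by
          intro z hz
          rw [Finset.mem_image] at hz
          obtain ⟨w, hw, rfl⟩ := hz
          rw [hTf'_def, Finset.mem_erase, Set.mem_toFinset] at hw
          obtain ⟨hwne, hwT⟩ := hw
          have hzB : β w ∈ B := (hβ w hwT).1
          have hzne : β w ≠ v₀ := fun h => hβA w hwT (by rw [h]; exact hv₀.1.1)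
          have hnadj : ¬ G.Adj v₀ (β w) := by
            intro hadj
            have := huniq' v₀ hv₀ (β w) hzB hadj
            exact hwne (hβinj w hwT v₀ hv₀ this)
          have hbz : β v₀ ≠ β w := fun h => hwne (hβinj w hwT v₀ hv₀ h.symm)
          exact hmemD (β w) hzB hzne hnadj hbz
        have hdisjT : Disjoint Tf' (Tf'.image β) := by
          rw [Finset.disjoint_left]
          intro a ha hb
          rw [Finset.mem_image] at hb
          obtain ⟨w, hw, hweq⟩ := hb
          rw [hTf'_def, Finset.mem_erase, Set.mem_toFinset] at ha hw
          exact hβA w hw.2 (by rw [hweq]; exact ha.2.1.1)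
        have himg : (Tf'.image β).card = Tf'.card := by
          apply Finset.card_image_of_injOn
          intro a ha b hb heq
          have ha' := Finset.mem_coe.mp ha
          have hb' := Finset.mem_coe.mp hb
          rw [hTf'_def, Finset.mem_erase, Set.mem_toFinset] at ha' hb'
          exact hβinj a ha'.2 b hb'.2 heq
        have hfinal : Tf'.card + Tf'.card ≤ d * (d - 1) := by
          have hsubU : Tf' ∪ Tf'.image β ⊆ Df := Finset.union_subset hsub1 hsub2
          have hle := Finset.card_le_card hsubU
          rw [Finset.card_union_of_disjoint hdisjT, himg] at hle
          linarith [hDcard]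
        have hTcard : T.ncard = Tf'.card + 1 := by
          rw [Set.ncard_eq_toFinset_card' T, hTf'_def,
            Finset.card_erase_of_mem (Set.mem_toFinset.mpr hv₀)]
          have h1 : 1 ≤ T.toFinset.card := Finset.card_pos.mpr ⟨v₀, Set.mem_toFinset.mpr hv₀⟩
          omega
        linarith [hfinal, hTcard]
    -- partition bound
    have hdisjAU : Disjoint A U₀ := by
      rw [Set.disjoint_left]
      intro w hwA hwU
      obtain ⟨-, v, hv, hadj⟩ := hwU
      exact hF1 v hv.1 hv.2 w hadj hwA
    have hdisjAB2 : Disjoint A B2 := by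
      rw [Set.disjoint_left]
      intro w h h2
      exact h2.2 h
    have hdisjUB2 : Disjoint U₀ B2 := by
      rw [Set.disjoint_left]
      intro w h h2
      exact h.1 h2.1
    have hpart : A.ncard + U₀.ncard + B2.ncard ≤ Fintype.card V := by
      have h1 : (A ∪ U₀ ∪ B2).ncard = A.ncard + U₀.ncard + B2.ncard := by
        rw [Set.ncard_union_eq (by
            rw [Set.disjoint_union_left]
            exact ⟨hdisjAB2, hdisjUB2⟩) (Set.toFinite _) (Set.toFinite _),
          Set.ncard_union_eq hdisjAU (Set.toFinite _) (Set.toFinite _)]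
      have h2 := Set.ncard_le_ncard (Set.subset_univ (A ∪ U₀ ∪ B2)) Set.finite_univ
      rwa [h1, Set.ncard_univ, Nat.card_eq_fintype_card] at h2
    have hBsplit : B.ncard = B1.ncard + B2.ncard := by
      have heq : B1 ∪ B2 = B := by
        rw [hB1_def, hB2_def, Set.inter_comm]
        exact Set.inter_union_diff B A
      rw [← heq, Set.ncard_union_eq (by
        rw [Set.disjoint_left]
        intro w h1 h2
        exact h2.2 h1.1) (Set.toFinite _) (Set.toFinite _)]
    have hS2 : S.ncard ≤ A.ncard + B1.ncard + B2.ncard := by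
      have := hScard0 hroot
      omega
    calc 2 * d * S.ncard ≤ 2 * d * (A.ncard + B1.ncard + B2.ncard) :=
        Nat.mul_le_mul_left _ hS2
      _ = 2 * d * A.ncard + 2 * (d * B1.ncard) + 2 * d * B2.ncard := by ring
      _ ≤ 2 * d * A.ncard + 2 * (d * U₀.ncard + T.ncard) + 2 * d * B2.ncard := by
          linarith [hedge]
      _ = 2 * d * (A.ncard + U₀.ncard + B2.ncard) + 2 * T.ncard := by ring
      _ ≤ 2 * d * Fintype.card V + (d * (d - 1) + 2) := by
          have := Nat.mul_le_mul_left (2 * d) hpart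
          linarith [hcov]
      _ = 2 * d * Fintype.card V + d * (d - 1) + 2 := by ring
  · -- |B| ≤ 1
    push_neg at hBpair
    have hBsub : B.Subsingleton := fun a ha b hb => hBpair a ha b hb
    rcases hBsub.eq_empty_or_singleton with hBe | ⟨v, hBv⟩
    · have : S.ncard ≤ Fintype.card V + 1 := by
        have := hScard1
        rw [hBe, Set.ncard_empty] at this
        omega
      exact arith1 d _ _ hd this
    · by_cases hroot : none ∈ S
      · have hvB : v ∈ B := by rw [hBv]; rfl
        have hNA : ∀ u, G.Adj u v → u ∉ A := by
          intro u hu hA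
          exact gp_not_mid2 hS hA hroot hvB (by simp) (myc_adj_or G u)
            ((myc_adj_ot G).mpr hu) (myc_adj_tr G v) (by simp) (by simp)
        have hdisj : Disjoint A (G.neighborSet v) := by
          rw [Set.disjoint_left]
          intro u hu hnv
          exact hNA u ((G.mem_neighborSet v u).mp hnv).symm hu
        have hAd : A.ncard + d ≤ Fintype.card V := by
          have hu : (A ∪ G.neighborSet v).ncard = A.ncard + d := by
            rw [Set.ncard_union_eq hdisj (Set.toFinite _) (Set.toFinite _), hreg v]
          have hle := Set.ncard_le_ncard (Set.subset_univ (A ∪ G.neighborSet v)) Set.finite_univ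
          rw [hu, Set.ncard_univ, Nat.card_eq_fintype_card] at hle
          exact hle
        have hk : S.ncard ≤ A.ncard + 2 := by
          have := hScard1
          rw [hBv, Set.ncard_singleton] at this
          omega
        exact arith2 d _ _ hd hAd _ hk
      · have : S.ncard ≤ Fintype.card V + 1 := by
          have h0 := hScard0 hroot
          rw [hBv, Set.ncard_singleton] at h0
          omega
        exact arith1 d _ _ hd this
end GPAux

/-- For a `d`-regular graph `G` of order `n` with `d ≥ 1`,
`gp(μ(G)) ≤ n + (d-1)/2 + 1/d`, equivalently `2d·gp(μ(G)) ≤ 2dn + d(d-1) + 2`. -/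
theorem gpNumber_mycielskian_regular_bound [Fintype V] (G : SimpleGraph V)
    {d : ℕ} (hd : 1 ≤ d) (hreg : IsRegularDeg G d) :
    2 * d * gpNumber (Mycielskian G) ≤
      2 * d * Fintype.card V + d * (d - 1) + 2 := by
  classical
  have hne : {k | ∃ S : Set (Option (V ⊕ V)), IsGPSet (Mycielskian G) S ∧ S.ncard = k}.Nonempty :=
    ⟨0, ∅, fun u hu => absurd hu (Set.notMem_empty u), Set.ncard_empty _⟩
  have hbdd : BddAbove {k | ∃ S : Set (Option (V ⊕ V)), IsGPSet (Mycielskian G) S ∧ S.ncard = k} := by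
    refine ⟨Fintype.card (Option (V ⊕ V)), ?_⟩
    rintro k ⟨S, -, rfl⟩
    have := Set.ncard_le_ncard (Set.subset_univ S) Set.finite_univ
    rwa [Set.ncard_univ, Nat.card_eq_fintype_card] at this
  obtain ⟨S, hS, hcard⟩ := Nat.sSup_mem hne hbdd
  rw [gpNumber, ← hcard]
  exact GPAux.main_bound hd hreg hS
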